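/- Let G be an abelian group and let Γ(G,g) denote the G-grading on B(1,2) given by deg(1) = 0, deg(u) = g, deg(v) = −g for a symplectic basis {u,v} of V. Then every G-grading on B(1,2) is isomorphic to some Γ(G,g), and Γ(G,g) ≅ Γ(G,h) as G-graded superalgebras if and only if g = h or g = −h. -/

import Mathlib

/-- The `G`-grading `Γ(G,g)` on `B(1,2) = F1 ⊕ Fu ⊕ Fv`: `deg 1 = 0`, `deg u = g`,
`deg v = −g`. -/
def GammaB12 {F S G : Type*} [Field F] [AddCommGroup S] [Module F S] [AddCommGroup G]
    [DecidableEq G] (e u v : S) (g : G) : G → Submodule F S := fun h =>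
  (if h = 0 then Submodule.span F {e} else ⊥) ⊔
  (if h = g then Submodule.span F {u} else ⊥) ⊔
  (if h = -g then Submodule.span F {v} else ⊥)

section Aux

variable {F S : Type*} [Field F] [AddCommGroup S] [Module F S]

private lemma map_symm_map (ψ : S ≃ₗ[F] S) (p : Submodule F S) :
    Submodule.map (ψ.symm : S →ₗ[F] S) (Submodule.map (ψ : S →ₗ[F] S) p) = p := by
  ext x
  constructor
  · rintro ⟨y, ⟨z, hz, rfl⟩, rfl⟩
    simpa using hz
  · intro hx
    exact ⟨ψ x, ⟨x, hx, rfl⟩, by simp⟩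

private lemma spanPair (b : S →ₗ[F] S →ₗ[F] F) (V : Submodule F S)
    (halt : ∀ u' ∈ V, b u' u' = 0)
    (hskew : ∀ u' ∈ V, ∀ v' ∈ V, b u' v' = - b v' u')
    (u v : S) (hu : u ∈ V) (hv : v ∈ V) (huv : b u v = 1)
    (hbasis : Submodule.span F {u, v} = V)
    (u' v' : S) (hu' : u' ∈ V) (hv' : v' ∈ V) (h1 : b u' v' = 1) :
    Submodule.span F {u', v'} = V := by
  obtain ⟨α, β, hαβ⟩ := Submodule.mem_span_pair.mp (hbasis ▸ hu')
  obtain ⟨α', β', hαβ'⟩ := Submodule.mem_span_pair.mp (hbasis ▸ hv')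
  have hvu : b v u = -1 := by rw [hskew v hv u hu, huv]
  have hdet : α * β' - β * α' = 1 := by
    have h2 := h1
    rw [← hαβ, ← hαβ'] at h2
    simp only [map_add, map_smul, LinearMap.add_apply, LinearMap.smul_apply,
      smul_eq_mul, halt u hu, halt v hv, huv, hvu] at h2
    linear_combination h2
  have hu'' : u' ∈ Submodule.span F ({u', v'} : Set S) :=
    Submodule.subset_span (by simp)
  have hv'' : v' ∈ Submodule.span F ({u', v'} : Set S) :=
    Submodule.subset_span (by simp)
  apply le_antisymm
  · rw [Submodule.span_le]
    intro x hx
    rcases hx with rfl | rfl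
    exacts [hu', hv']
  · rw [← hbasis, Submodule.span_le]
    have humem : u ∈ Submodule.span F ({u', v'} : Set S) := by
      have key : β' • u' - β • v' = (α * β' - β * α') • u := by
        rw [← hαβ, ← hαβ']
        module
      have : u = β' • u' - β • v' := by rw [key, hdet, one_smul]
      rw [this]
      exact sub_mem (Submodule.smul_mem _ _ hu'') (Submodule.smul_mem _ _ hv'')
    have hvmem : v ∈ Submodule.span F ({u', v'} : Set S) := by
      have key : α • v' - α' • u' = (α * β' - β * α') • v := by
        rw [← hαβ, ← hαβ']
        module
      have : v = α • v' - α' • u' := by rw [key, hdet, one_smul]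
      rw [this]
      exact sub_mem (Submodule.smul_mem _ _ hv'') (Submodule.smul_mem _ _ hu'')
    intro x hx
    rcases hx with rfl | rfl
    exacts [humem, hvmem]

private lemma keyAuto (mul : S →ₗ[F] S →ₗ[F] S) (e : S) (V : Submodule F S)
    (b : S →ₗ[F] S →ₗ[F] F) (he : e ≠ 0)
    (hcompl : IsCompl (Submodule.span F {e}) V)
    (hunit : ∀ x : S, mul e x = x ∧ mul x e = x)
    (hmulV : ∀ u' ∈ V, ∀ v' ∈ V, mul u' v' = b u' v' • e)
    (halt : ∀ u' ∈ V, b u' u' = 0)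
    (hskew : ∀ u' ∈ V, ∀ v' ∈ V, b u' v' = - b v' u')
    (u v : S) (hu : u ∈ V) (hv : v ∈ V) (huv : b u v = 1)
    (hbasis : Submodule.span F {u, v} = V)
    (u' v' : S) (hu' : u' ∈ V) (hv' : v' ∈ V) (h1 : b u' v' = 1) :
    ∃ ψ : S ≃ₗ[F] S, ψ e = e ∧ ψ u = u' ∧ ψ v = v' ∧
      (∀ x y : S, ψ (mul x y) = mul (ψ x) (ψ y)) ∧
      Submodule.map (ψ : S →ₗ[F] S) V = V := by
  have hli : ∀ w z : S, w ∈ V → z ∈ V → b w z = 1 → LinearIndependent F ![e, w, z] := by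
    intro w z hw hz hwz
    rw [Fintype.linearIndependent_iff]
    intro c hc
    rw [Fin.sum_univ_three] at hc
    simp only [Matrix.cons_val_zero, Matrix.cons_val_one, Matrix.head_cons,
      Matrix.cons_val_two, Matrix.tail_cons] at hc
    have h0 : c 0 = 0 := by
      have hmem : c 0 • e ∈ V := by
        have heq : c 0 • e = -(c 1 • w + c 2 • z) := by
          rw [add_assoc] at hc
          exact eq_neg_of_add_eq_zero_left hc
        rw [heq]
        exact neg_mem (add_mem (Submodule.smul_mem _ _ hw) (Submodule.smul_mem _ _ hz))
      have hz0 := Submodule.disjoint_def.mp hcompl.disjoint (c 0 • e)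
        (Submodule.smul_mem _ _ (Submodule.mem_span_singleton_self e)) hmem
      exact (smul_eq_zero.mp hz0).resolve_right he
    have hrest : c 1 • w + c 2 • z = 0 := by
      rw [h0, zero_smul, zero_add] at hc; exact hc
    have h1' : c 1 = 0 := by
      have h3 := congrArg (fun t => b t z) hrest
      simp only [map_add, map_smul, LinearMap.add_apply, LinearMap.smul_apply,
        smul_eq_mul, hwz, halt z hz, map_zero, LinearMap.zero_apply, mul_one, mul_zero,
        add_zero] at h3
      exact h3
    have h2' : c 2 = 0 := by
      have h3 := congrArg (fun t => b w t) hrest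
      simp only [map_add, map_smul, smul_eq_mul, hwz, halt w hw, map_zero, mul_one,
        mul_zero, zero_add] at h3
      exact h3
    intro i; fin_cases i <;> assumption
  have hsp : ∀ w z : S, w ∈ V → z ∈ V → b w z = 1 →
      ⊤ ≤ Submodule.span F (Set.range ![e, w, z]) := by
    intro w z hw hz hwz
    have hsub : ({e, w, z} : Set S) ⊆ Set.range ![e, w, z] := by
      intro x hx
      rcases hx with rfl | rfl | rfl
      exacts [⟨0, rfl⟩, ⟨1, rfl⟩, ⟨2, rfl⟩]
    have h2 : Submodule.span F ({e, w, z} : Set S) = ⊤ := by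
      rw [Submodule.span_insert,
        spanPair b V halt hskew u v hu hv huv hbasis w z hw hz hwz]
      exact codisjoint_iff.mp hcompl.codisjoint
    rw [← h2]
    exact Submodule.span_mono hsub
  let B : Module.Basis (Fin 3) F S := Module.Basis.mk (hli u v hu hv huv) (hsp u v hu hv huv)
  let B' : Module.Basis (Fin 3) F S := Module.Basis.mk (hli u' v' hu' hv' h1) (hsp u' v' hu' hv' h1)
  let ψ : S ≃ₗ[F] S := B.equiv B' (Equiv.refl _)
  have hB : ∀ i, B i = ![e, u, v] i := fun i => Module.Basis.mk_apply _ _ i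
  have hB' : ∀ i, B' i = ![e, u', v'] i := fun i => Module.Basis.mk_apply _ _ i
  have hψB : ∀ i, ψ (B i) = B' i := fun i => B.equiv_apply i B' (Equiv.refl _)
  have hψe : ψ e = e := by have := hψB 0; rwa [hB, hB'] at this
  have hψu : ψ u = u' := by have := hψB 1; rwa [hB, hB'] at this
  have hψv : ψ v = v' := by have := hψB 2; rwa [hB, hB'] at this
  have m_uu : mul u u = 0 := by rw [hmulV u hu u hu, halt u hu, zero_smul]
  have m_uv : mul u v = e := by rw [hmulV u hu v hv, huv, one_smul]
  have m_vu : mul v u = -e := by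
    rw [hmulV v hv u hu, hskew v hv u hu, huv, neg_smul, one_smul]
  have m_vv : mul v v = 0 := by rw [hmulV v hv v hv, halt v hv, zero_smul]
  have m_uu' : mul u' u' = 0 := by rw [hmulV u' hu' u' hu', halt u' hu', zero_smul]
  have m_uv' : mul u' v' = e := by rw [hmulV u' hu' v' hv', h1, one_smul]
  have m_vu' : mul v' u' = -e := by
    rw [hmulV v' hv' u' hu', hskew v' hv' u' hu', h1, neg_smul, one_smul]
  have m_vv' : mul v' v' = 0 := by rw [hmulV v' hv' v' hv', halt v' hv', zero_smul]
  have hL : mul.compr₂ (ψ : S →ₗ[F] S)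
      = (mul.compl₂ (ψ : S →ₗ[F] S)).comp (ψ : S →ₗ[F] S) := by
    apply B.ext; intro i
    apply B.ext; intro j
    fin_cases i <;> fin_cases j <;>
      simp [hB, LinearMap.compr₂_apply, LinearMap.compl₂_apply, hψe, hψu, hψv,
        (hunit _).1, (hunit _).2, m_uu, m_uv, m_vu, m_vv, m_uu', m_uv', m_vu', m_vv']
  have hmul' : ∀ x y : S, ψ (mul x y) = mul (ψ x) (ψ y) := by
    intro x y
    have h3 := LinearMap.congr_fun (LinearMap.congr_fun hL x) y
    simpa [LinearMap.compr₂_apply, LinearMap.compl₂_apply] using h3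
  have hmapV : Submodule.map (ψ : S →ₗ[F] S) V = V := by
    conv_lhs => rw [← hbasis]
    rw [Submodule.map_span]
    have himg : (ψ : S →ₗ[F] S) '' {u, v} = {u', v'} := by
      rw [Set.image_insert_eq, Set.image_singleton]
      simp [hψu, hψv]
    rw [himg, spanPair b V halt hskew u v hu hv huv hbasis u' v' hu' hv' h1]
  exact ⟨ψ, hψe, hψu, hψv, hmul', hmapV⟩

end Aux

private lemma mapGamma {F S G : Type*} [Field F] [AddCommGroup S] [Module F S]
    [AddCommGroup G] [DecidableEq G] (ψ : S ≃ₗ[F] S) (e u v : S) (g k : G) :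
    Submodule.map (ψ : S →ₗ[F] S) (GammaB12 e u v g k)
      = GammaB12 (ψ e) (ψ u) (ψ v) g k := by
  unfold GammaB12
  rw [Submodule.map_sup, Submodule.map_sup]
  split_ifs <;> simp [Submodule.map_span]

theorem B12_gradings_up_to_isomorphism {F S G : Type*} [Field F] [AddCommGroup S]
    [Module F S] [AddCommGroup G] [DecidableEq G]
    (hchar : ringChar F = 3)
    (mul : S →ₗ[F] S →ₗ[F] S) (e : S) (V : Submodule F S) (b : S →ₗ[F] S →ₗ[F] F)
    (he : e ≠ 0)
    (hcompl : IsCompl (Submodule.span F {e}) V)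
    (hV2 : Module.finrank F V = 2)
    (hunit : ∀ x : S, mul e x = x ∧ mul x e = x)
    (hmulV : ∀ u' ∈ V, ∀ v' ∈ V, mul u' v' = b u' v' • e)
    (halt : ∀ u' ∈ V, b u' u' = 0)
    (hskew : ∀ u' ∈ V, ∀ v' ∈ V, b u' v' = - b v' u')
    (hnd : ∀ u' ∈ V, (∀ v' ∈ V, b u' v' = 0) → u' = 0)
    (u v : S) (hu : u ∈ V) (hv : v ∈ V) (huv : b u v = 1)
    (hbasis : Submodule.span F {u, v} = V) :
    (∀ γ : G → Submodule F S, DirectSum.IsInternal γ →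
      (∀ g h : G, ∀ x ∈ γ g, ∀ y ∈ γ h, mul x y ∈ γ (g + h)) →
      (∀ g : G, γ g = (γ g ⊓ Submodule.span F {e}) ⊔ (γ g ⊓ V)) →
      ∃ (g : G) (φ : S ≃ₗ[F] S),
        (∀ x y : S, φ (mul x y) = mul (φ x) (φ y)) ∧
        Submodule.map (φ : S →ₗ[F] S) V = V ∧
        ∀ h : G, Submodule.map (φ : S →ₗ[F] S) (γ h) = GammaB12 e u v g h) ∧
    (∀ g h : G,
      (∃ φ : S ≃ₗ[F] S,
        (∀ x y : S, φ (mul x y) = mul (φ x) (φ y)) ∧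
        Submodule.map (φ : S →ₗ[F] S) V = V ∧
        ∀ k : G, Submodule.map (φ : S →ₗ[F] S) (GammaB12 e u v g k) = GammaB12 e u v h k)
      ↔ (g = h ∨ g = -h)) := by
  classical
  have hune : u ≠ 0 := by
    intro h0
    rw [h0, map_zero, LinearMap.zero_apply] at huv
    exact zero_ne_one huv
  constructor
  · -- Part 1
    intro γ hInt hMul hSplit
    have hind := hInt.submodule_iSupIndep
    have htop := hInt.submodule_iSup_eq_top
    have hpd : ∀ {k l : G}, k ≠ l → ∀ x : S, x ∈ γ k → x ∈ γ l → x = 0 := by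
      intro k l hkl x hxk hxl
      exact Submodule.disjoint_def.mp (hind.pairwiseDisjoint hkl) x hxk hxl
    have hdec : ∀ x : S, ∃ (s : Finset G) (p w : G → S),
        (∀ k, p k ∈ γ k) ∧ (∀ k, p k ∈ Submodule.span F {e}) ∧
        (∀ k, w k ∈ γ k) ∧ (∀ k, w k ∈ V) ∧
        x = (∑ k ∈ s, p k) + ∑ k ∈ s, w k := by
      intro x
      have hx : x ∈ iSup γ := htop ▸ Submodule.mem_top
      obtain ⟨f, hf⟩ := (Submodule.mem_iSup_iff_exists_dfinsupp' γ x).mp hx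
      have hchoice : ∀ k : G, ∃ pk : S, ∃ wk : S,
          (pk ∈ γ k ∧ pk ∈ Submodule.span F {e}) ∧ (wk ∈ γ k ∧ wk ∈ V) ∧
          pk + wk = ↑(f k) := by
        intro k
        have hfk : (↑(f k) : S) ∈ (γ k ⊓ Submodule.span F {e}) ⊔ (γ k ⊓ V) := by
          rw [← hSplit k]; exact (f k).2
        obtain ⟨pk, hpk, wk, hwk, hpw⟩ := Submodule.mem_sup.mp hfk
        exact ⟨pk, wk, Submodule.mem_inf.mp hpk, Submodule.mem_inf.mp hwk, hpw⟩
      choose p w hp hw hpw using hchoice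
      refine ⟨f.support, p, w, fun k => (hp k).1, fun k => (hp k).2,
        fun k => (hw k).1, fun k => (hw k).2, ?_⟩
      rw [← hf, DFinsupp.sum, ← Finset.sum_add_distrib]
      exact Finset.sum_congr rfl fun k _ => (hpw k).symm
    have hVsum : ∀ x ∈ V, ∃ (s : Finset G) (w : G → S),
        (∀ k, w k ∈ γ k) ∧ (∀ k, w k ∈ V) ∧ x = ∑ k ∈ s, w k := by
      intro x hxV
      obtain ⟨s, p, w, hpγ, hpE, hwγ, hwV, hsum⟩ := hdec x
      have hPE : (∑ k ∈ s, p k) ∈ Submodule.span F {e} :=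
        Submodule.sum_mem _ fun k _ => hpE k
      have hPV : (∑ k ∈ s, p k) ∈ V := by
        have hPeq : (∑ k ∈ s, p k) = x - ∑ k ∈ s, w k := by rw [hsum]; abel
        rw [hPeq]
        exact sub_mem hxV (Submodule.sum_mem _ fun k _ => hwV k)
      have hP0 : (∑ k ∈ s, p k) = 0 :=
        Submodule.disjoint_def.mp hcompl.disjoint _ hPE hPV
      exact ⟨s, w, hwγ, hwV, by rw [hsum, hP0, zero_add]⟩
    have he0 : e ∈ γ 0 := by
      obtain ⟨s, p, w, hpγ, hpE, hwγ, hwV, hsum⟩ := hdec e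
      have hWV : (∑ k ∈ s, w k) ∈ V := Submodule.sum_mem _ fun k _ => hwV k
      have hWE : (∑ k ∈ s, w k) ∈ Submodule.span F {e} := by
        have hWeq : (∑ k ∈ s, w k) = e - ∑ k ∈ s, p k := by rw [hsum]; abel
        rw [hWeq]
        exact sub_mem (Submodule.mem_span_singleton_self e)
          (Submodule.sum_mem _ fun k _ => hpE k)
      have hW0 : (∑ k ∈ s, w k) = 0 :=
        Submodule.disjoint_def.mp hcompl.disjoint _ hWE hWV
      have hesum : e = ∑ k ∈ s, p k := by rw [hsum, hW0, add_zero]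
      have hex : ∃ k ∈ s, p k ≠ 0 := by
        by_contra hcon
        push_neg at hcon
        exact he (by rw [hesum]; exact Finset.sum_eq_zero hcon)
      obtain ⟨k₀, hk₀s, hpk₀⟩ := hex
      obtain ⟨a, ha⟩ := Submodule.mem_span_singleton.mp (hpE k₀)
      have ha0 : a ≠ 0 := by rintro rfl; rw [zero_smul] at ha; exact hpk₀ ha.symm
      have hek : e ∈ γ k₀ := by
        have heeq : e = a⁻¹ • p k₀ := by
          rw [← ha, smul_smul, inv_mul_cancel₀ ha0, one_smul]
        rw [heeq]; exact Submodule.smul_mem _ _ (hpγ k₀)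
      have hk00 : k₀ = 0 := by
        by_contra hne
        have h2 : e ∈ γ (k₀ + k₀) := by
          have h3 := hMul k₀ k₀ e hek e hek
          rwa [(hunit e).1] at h3
        have hne2 : k₀ + k₀ ≠ k₀ := fun hcon => hne (by rwa [add_eq_left] at hcon)
        exact absurd (hpd hne2 e h2 hek) he
      rwa [hk00] at hek
    obtain ⟨s, w, hwγ, hwV, hueq⟩ := hVsum u hu
    obtain ⟨t, y, hyγ, hyV, hveq⟩ := hVsum v hv
    have hex : ∃ k ∈ s, ∃ l ∈ t, b (w k) (y l) ≠ 0 := by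
      by_contra hcon
      push_neg at hcon
      have hbz : b u v = 0 := by
        rw [hueq, hveq, map_sum]
        refine Finset.sum_eq_zero fun l hl => ?_
        rw [map_sum, LinearMap.sum_apply]
        exact Finset.sum_eq_zero fun k hk => hcon k hk l hl
      rw [huv] at hbz; exact one_ne_zero hbz
    obtain ⟨k, hks, l, hlt, hbne⟩ := hex
    have hmule : mul (w k) (y l) = b (w k) (y l) • e := hmulV _ (hwV k) _ (hyV l)
    have hce : b (w k) (y l) • e ∈ γ (k + l) := by
      rw [← hmule]; exact hMul k l _ (hwγ k) _ (hyγ l)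
    have hekl : e ∈ γ (k + l) := by
      have heeq : e = (b (w k) (y l))⁻¹ • (b (w k) (y l) • e) := by
        rw [smul_smul, inv_mul_cancel₀ hbne, one_smul]
      rw [heeq]; exact Submodule.smul_mem _ _ hce
    have hkl : k + l = 0 := by
      by_contra hne
      exact absurd (hpd hne e hekl he0) he
    have hlk : l = -k := eq_neg_of_add_eq_zero_right hkl
    have hu₀γ : w k ∈ γ k := hwγ k
    have hu₀V : w k ∈ V := hwV k
    have hv₁γ : (b (w k) (y l))⁻¹ • y l ∈ γ (-k) :=
      Submodule.smul_mem _ _ (hlk ▸ hyγ l)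
    have hv₁V : (b (w k) (y l))⁻¹ • y l ∈ V := Submodule.smul_mem _ _ (hyV l)
    have hbuv₁ : b (w k) ((b (w k) (y l))⁻¹ • y l) = 1 := by
      rw [map_smul, smul_eq_mul, inv_mul_cancel₀ hbne]
    obtain ⟨ψ, hψe, hψu, hψv, hψmul, hψV⟩ :=
      keyAuto mul e V b he hcompl hunit hmulV halt hskew u v hu hv huv hbasis
        (w k) ((b (w k) (y l))⁻¹ • y l) hu₀V hv₁V hbuv₁
    have hspan01 : Submodule.span F {w k, (b (w k) (y l))⁻¹ • y l} = V :=
      spanPair b V halt hskew u v hu hv huv hbasis _ _ hu₀V hv₁V hbuv₁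
    have hmapD : ∀ h : G, Submodule.map (ψ : S →ₗ[F] S) (GammaB12 e u v k h)
        = GammaB12 e (w k) ((b (w k) (y l))⁻¹ • y l) k h := by
      intro h
      rw [mapGamma, hψe, hψu, hψv]
    have hle : ∀ h : G, GammaB12 e (w k) ((b (w k) (y l))⁻¹ • y l) k h ≤ γ h := by
      intro h
      unfold GammaB12
      refine sup_le (sup_le ?_ ?_) ?_
      · split_ifs with hh
        · subst hh; rw [Submodule.span_singleton_le_iff_mem]; exact he0
        · exact bot_le
      · split_ifs with hh
        · subst hh; rw [Submodule.span_singleton_le_iff_mem]; exact hu₀γ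
        · exact bot_le
      · split_ifs with hh
        · subst hh; rw [Submodule.span_singleton_le_iff_mem]; exact hv₁γ
        · exact bot_le
    have htop' : (⨆ h : G, GammaB12 (F := F) e (w k) ((b (w k) (y l))⁻¹ • y l) k h) = ⊤ := by
      apply le_antisymm le_top
      rw [← codisjoint_iff.mp hcompl.codisjoint]
      apply sup_le
      · have h4 : Submodule.span F {e} ≤ GammaB12 e (w k) ((b (w k) (y l))⁻¹ • y l) k 0 := by
          unfold GammaB12
          exact le_sup_of_le_left (le_sup_of_le_left (by simp))
        exact h4.trans (le_iSup _ 0)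
      · rw [← hspan01, Submodule.span_insert]
        apply sup_le
        · have h4 : Submodule.span F {w k}
              ≤ GammaB12 e (w k) ((b (w k) (y l))⁻¹ • y l) k k := by
            unfold GammaB12
            exact le_sup_of_le_left (le_sup_of_le_right (by simp))
          exact h4.trans (le_iSup _ k)
        · have h4 : Submodule.span F {(b (w k) (y l))⁻¹ • y l}
              ≤ GammaB12 e (w k) ((b (w k) (y l))⁻¹ • y l) k (-k) := by
            unfold GammaB12
            exact le_sup_of_le_right (by simp)
          exact h4.trans (le_iSup _ (-k))
    have hge : ∀ h : G, γ h ≤ GammaB12 e (w k) ((b (w k) (y l))⁻¹ • y l) k h := by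
      intro h x hx
      have hx' : x ∈ ⨆ j : G, GammaB12 (F := F) e (w k) ((b (w k) (y l))⁻¹ • y l) k j := by
        rw [htop']; trivial
      obtain ⟨f, hf⟩ := (Submodule.mem_iSup_iff_exists_dfinsupp' _ x).mp hx'
      have hxz : x = ↑(f h) + ∑ j ∈ f.support.erase h, (↑(f j) : S) := by
        rw [← hf, DFinsupp.sum]
        by_cases hhs : h ∈ f.support
        · exact (Finset.add_sum_erase _ _ hhs).symm
        · rw [Finset.erase_eq_of_notMem hhs]
          have hfh0 : (↑(f h) : S) = 0 := by
            rw [DFinsupp.notMem_support_iff.mp hhs]; rfl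
          rw [hfh0, zero_add]
      have hzγ : (∑ j ∈ f.support.erase h, (↑(f j) : S)) ∈ ⨆ j, ⨆ _ : j ≠ h, γ j := by
        refine Submodule.sum_mem _ fun j hj => ?_
        have hjne : j ≠ h := (Finset.mem_erase.mp hj).1
        exact Submodule.mem_iSup_of_mem j (Submodule.mem_iSup_of_mem hjne (hle j (f j).2))
      have hzh : (∑ j ∈ f.support.erase h, (↑(f j) : S)) ∈ γ h := by
        have hfh : (↑(f h) : S) ∈ γ h := hle h (f h).2
        have hzeq : (∑ j ∈ f.support.erase h, (↑(f j) : S)) = x - ↑(f h) := by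
          rw [hxz]; abel
        rw [hzeq]; exact sub_mem hx hfh
      have hz0 : (∑ j ∈ f.support.erase h, (↑(f j) : S)) = 0 :=
        Submodule.disjoint_def.mp (hind h) _ hzh hzγ
      have hxfh : x = ↑(f h) := by rw [hxz, hz0, add_zero]
      rw [hxfh]; exact (f h).2
    have hγeq : ∀ h : G, γ h = Submodule.map (ψ : S →ₗ[F] S) (GammaB12 e u v k h) := by
      intro h
      rw [hmapD h]
      exact le_antisymm (hge h) (hle h)
    refine ⟨k, ψ.symm, ?_, ?_, ?_⟩
    · intro x y'
      have h3 := hψmul (ψ.symm x) (ψ.symm y')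
      rw [ψ.apply_symm_apply, ψ.apply_symm_apply] at h3
      rw [← h3, ψ.symm_apply_apply]
    · conv_lhs => rw [← hψV]
      exact map_symm_map ψ V
    · intro h
      rw [hγeq h, map_symm_map]
  · -- Part 2
    intro g h
    constructor
    · rintro ⟨φ, hφmul, hφV, hφmap⟩
      by_cases hgh : g = h
      · exact Or.inl hgh
      · right
        by_contra hgnh
        by_cases hg0 : g = 0
        · subst hg0
          have hh0 : h ≠ 0 := fun hcon => hgh hcon.symm
          have h1 := hφmap h
          have hLbot : GammaB12 (F := F) e u v (0 : G) h = ⊥ := by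
            unfold GammaB12
            simp [hh0]
          rw [hLbot, Submodule.map_bot] at h1
          have humem : u ∈ GammaB12 (F := F) e u v h h := by
            unfold GammaB12
            exact Submodule.mem_sup_left (Submodule.mem_sup_right
              (by simp [Submodule.mem_span_singleton_self]))
          rw [← h1] at humem
          exact hune (by simpa using humem)
        · have h1 := hφmap g
          have hRbot : GammaB12 (F := F) e u v h g = ⊥ := by
            unfold GammaB12
            simp [hg0, hgh, hgnh]
          have humem : u ∈ GammaB12 (F := F) e u v g g := by
            unfold GammaB12
            exact Submodule.mem_sup_left (Submodule.mem_sup_right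
              (by simp [Submodule.mem_span_singleton_self]))
          have hmem2 : φ u ∈ Submodule.map (φ : S →ₗ[F] S) (GammaB12 e u v g g) :=
            ⟨u, humem, rfl⟩
          rw [h1, hRbot] at hmem2
          have hφu0 : φ u = 0 := by simpa using hmem2
          exact hune (by simpa using φ.map_eq_zero_iff.mp hφu0)
    · rintro (rfl | rfl)
      · exact ⟨LinearEquiv.refl F S, fun x y => rfl, by simp, fun k => by simp⟩
      · have hnegu : (-u) ∈ V := neg_mem hu
        have hbv : b v (-u) = 1 := by
          rw [map_neg, hskew v hv u hu, huv, neg_neg]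
        obtain ⟨ψ, hψe, hψu, hψv, hψmul, hψV⟩ :=
          keyAuto mul e V b he hcompl hunit hmulV halt hskew u v hu hv huv hbasis
            v (-u) hv hnegu hbv
        refine ⟨ψ, hψmul, hψV, fun k => ?_⟩
        rw [mapGamma, hψe, hψu, hψv]
        have hspanneg : Submodule.span F ({-u} : Set S) = Submodule.span F {u} := by
          apply le_antisymm <;> rw [Submodule.span_singleton_le_iff_mem]
          · exact neg_mem (Submodule.mem_span_singleton_self u)
          · have h5 := neg_mem (Submodule.mem_span_singleton_self (R := F) (-u))
            rwa [neg_neg] at h5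
        unfold GammaB12
        rw [neg_neg, sup_right_comm, hspanneg]
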